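/- Let q = p^m with p an odd prime, D a skew set of F_q, and H an r-dimensional F_p-subspace of F_q (1 ≤ r ≤ m). Then the number of elements d ∈ D such that Tr(a d) = 0 for all a ∈ H equals (q − p^r)/(2 p^r). -/

import Mathlib

open scoped Classical

/-- `D ⊆ F_q^*` is a skew set if `D`, `-D` and `{0}` partition `F_q`. -/
def IsSkewSet {F : Type} [Field F] (D : Set F) : Prop :=
  (0 : F) ∉ D ∧ (∀ d ∈ D, -d ∉ D) ∧ ∀ x : F, x ≠ 0 → x ∈ D ∨ -x ∈ D

/-- For a skew set `D` and an `r`-dimensional `F_p`-subspace `H` of `F_q`, the number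
of `d ∈ D` with `Tr(ad) = 0` for all `a ∈ H` equals `(q - p^r)/(2p^r)`. -/
theorem stmt13 (p m : ℕ) [Fact p.Prime] (hp : Odd p)
    (F : Type) [Field F] [Fintype F] [Algebra (ZMod p) F]
    (hq : Fintype.card F = p ^ m)
    (D : Finset F) (hD : IsSkewSet (↑D : Set F))
    (H : Submodule (ZMod p) F) (r : ℕ) (hr1 : 1 ≤ r) (hrm : r ≤ m)
    (hH : Module.finrank (ZMod p) ↥H = r) :
    (D.filter (fun d => ∀ a ∈ H, Algebra.trace (ZMod p) F (a * d) = 0)).card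
        * (2 * p ^ r)
      = p ^ m - p ^ r := by
  have hpprime : p.Prime := Fact.out
  set B := Algebra.traceForm (ZMod p) F with hB
  have hBnd : B.Nondegenerate := traceForm_nondegenerate (ZMod p) F
  have hBrefl : B.IsRefl := (Algebra.traceForm_isSymm (R := ZMod p) (S := F)).isRefl
  set K := B.orthogonal H with hKdef
  -- finrank computations
  have hfinF : Module.finrank (ZMod p) F = m := by
    have h := Module.card_eq_pow_finrank (K := ZMod p) (V := F)
    rw [ZMod.card, hq] at h
    exact (Nat.pow_right_injective hpprime.two_le h.symm)
  have hK : Module.finrank (ZMod p) K = m - r := by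
    rw [LinearMap.BilinForm.finrank_orthogonal hBnd, hfinF, hH]
  have hcardK : Fintype.card K = p ^ (m - r) := by
    rw [Module.card_eq_pow_finrank (K := ZMod p) (V := K), ZMod.card, hK]
  -- rewrite the filter condition as membership in K
  have hfilt : (D.filter (fun d => ∀ a ∈ H, Algebra.trace (ZMod p) F (a * d) = 0))
      = D.filter (fun d => d ∈ K) := by
    apply Finset.filter_congr
    intro d _
    simp only [hKdef, LinearMap.BilinForm.mem_orthogonal_iff]
    constructor
    · intro h a ha
      exact h a ha
    · intro h a ha
      exact h a ha
  rw [hfilt]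
  set S := D.filter (fun d => d ∈ K) with hS
  set KF : Finset F := (Finset.univ.filter (fun x => x ∈ K)) \ {0} with hKF
  have hneg_memK : ∀ x : F, x ∈ K → -x ∈ K := fun x hx => K.neg_mem hx
  have hSsub : ∀ d ∈ S, d ∈ D ∧ d ∈ K := by
    intro d hd
    exact ⟨(Finset.mem_filter.mp hd).1, (Finset.mem_filter.mp hd).2⟩
  have hunion : KF = S ∪ S.image Neg.neg := by
    ext x
    simp only [hKF, Finset.mem_sdiff, Finset.mem_filter, Finset.mem_univ, true_and,
      Finset.mem_singleton, Finset.mem_union, Finset.mem_image, hS]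
    constructor
    · rintro ⟨hxK, hx0⟩
      rcases hD.2.2 x hx0 with hxD | hxD
      · exact Or.inl ⟨hxD, hxK⟩
      · exact Or.inr ⟨-x, ⟨hxD, hneg_memK x hxK⟩, neg_neg x⟩
    · rintro (⟨hxD, hxK⟩ | ⟨y, ⟨hyD, hyK⟩, rfl⟩)
      · exact ⟨hxK, fun h => hD.1 (h ▸ hxD)⟩
      · refine ⟨hneg_memK y hyK, fun h => hD.1 ?_⟩
        have : y = 0 := by
          have := neg_eq_zero.mp h
          exact this
        exact this ▸ hyD
  have hdisj : Disjoint S (S.image Neg.neg) := by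
    rw [Finset.disjoint_left]
    rintro x hx hx'
    rcases Finset.mem_image.mp hx' with ⟨y, hy, rfl⟩
    have hyD := (Finset.mem_filter.mp hy).1
    have := hD.2.1 y hyD
    exact this (Finset.mem_filter.mp hx).1
  have hcard_image : (S.image Neg.neg).card = S.card :=
    Finset.card_image_of_injective S neg_injective
  have hcardKF : KF.card = p ^ (m - r) - 1 := by
    have h1 : (Finset.univ.filter (fun x : F => x ∈ K)).card = Fintype.card K := by
      rw [Fintype.card_subtype]
    have h0 : (0 : F) ∈ Finset.univ.filter (fun x : F => x ∈ K) := by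
      simp [K.zero_mem]
    rw [hKF, Finset.card_sdiff_of_subset (by simpa using h0), h1, hcardK, Finset.card_singleton]
  have h2S : 2 * S.card = p ^ (m - r) - 1 := by
    rw [← hcardKF, hunion, Finset.card_union_of_disjoint hdisj, hcard_image]
    ring
  have hpr : 1 ≤ p ^ (m - r) := Nat.one_le_pow _ _ hpprime.pos
  calc S.card * (2 * p ^ r) = (2 * S.card) * p ^ r := by ring
    _ = (p ^ (m - r) - 1) * p ^ r := by rw [h2S]
    _ = p ^ (m - r) * p ^ r - 1 * p ^ r := Nat.sub_mul _ _ _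
    _ = p ^ m - p ^ r := by
        rw [← pow_add, Nat.sub_add_cancel hrm, one_mul]
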